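/- For every real a ≥ 1, the function h : ℝ → ℝ defined by h(x) = (a−1)·log(a² + x²) − 2x·arctan(x/a) is concave on ℝ; indeed its second derivative equals −(2(a−1)x² + 2(a+1)a²)/(a² + x²)², which is nonpositive for all x. -/

import Mathlib

open Real

section aux

variable (a : ℝ)

private lemma aux_pos (ha : 1 ≤ a) (x : ℝ) : 0 < a ^ 2 + x ^ 2 := by
  have : (0:ℝ) < a ^ 2 := by positivity
  nlinarith [sq_nonneg x]

private lemma aux_hasDeriv1 (ha : 1 ≤ a) (h : ℝ → ℝ)
    (hh : ∀ x : ℝ, h x = (a - 1) * Real.log (a ^ 2 + x ^ 2)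
        - 2 * x * Real.arctan (x / a)) (x : ℝ) :
    HasDerivAt h (-2 * x / (a ^ 2 + x ^ 2) - 2 * Real.arctan (x / a)) x := by
  have ha0 : a ≠ 0 := by linarith
  have hpos := aux_pos a ha x
  have h1 : HasDerivAt (fun x : ℝ => a ^ 2 + x ^ 2) (2 * x) x := by
    simpa using (hasDerivAt_pow 2 x).const_add (a ^ 2)
  have h2 : HasDerivAt (fun x : ℝ => Real.log (a ^ 2 + x ^ 2))
      (2 * x / (a ^ 2 + x ^ 2)) x := h1.log hpos.ne'
  have h3 : HasDerivAt (fun x : ℝ => x / a) (1 / a) x := by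
    simpa using (hasDerivAt_id x).div_const a
  have h4 : HasDerivAt (fun x : ℝ => Real.arctan (x / a))
      (1 / (1 + (x / a) ^ 2) * (1 / a)) x :=
    by have hc := (Real.hasDerivAt_arctan (x / a)).comp x h3; exact hc
  have h5 : HasDerivAt (fun x : ℝ => (a - 1) * Real.log (a ^ 2 + x ^ 2)
      - 2 * x * Real.arctan (x / a))
      ((a - 1) * (2 * x / (a ^ 2 + x ^ 2))
        - (2 * Real.arctan (x / a) + 2 * x * (1 / (1 + (x / a) ^ 2) * (1 / a)))) x := by
    have := (h2.const_mul (a - 1)).sub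
      ((((hasDerivAt_id x).const_mul 2).mul h4))
    simp only [id_eq] at this
    exact this.congr_deriv (by ring)
  have heq : h = fun x : ℝ => (a - 1) * Real.log (a ^ 2 + x ^ 2)
      - 2 * x * Real.arctan (x / a) := funext hh
  rw [heq]
  convert h5 using 1
  have h6 : 1 + (x / a) ^ 2 ≠ 0 := by positivity
  field_simp
  ring

private lemma aux_deriv1 (ha : 1 ≤ a) (h : ℝ → ℝ)
    (hh : ∀ x : ℝ, h x = (a - 1) * Real.log (a ^ 2 + x ^ 2)
        - 2 * x * Real.arctan (x / a)) :
    deriv h = fun x => -2 * x / (a ^ 2 + x ^ 2) - 2 * Real.arctan (x / a) := by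
  funext x
  exact (aux_hasDeriv1 a ha h hh x).deriv

private lemma aux_hasDeriv2 (ha : 1 ≤ a) (x : ℝ) :
    HasDerivAt (fun x => -2 * x / (a ^ 2 + x ^ 2) - 2 * Real.arctan (x / a))
      (-(2 * (a - 1) * x ^ 2 + 2 * (a + 1) * a ^ 2) / (a ^ 2 + x ^ 2) ^ 2) x := by
  have ha0 : a ≠ 0 := by linarith
  have hpos := aux_pos a ha x
  have h1 : HasDerivAt (fun x : ℝ => a ^ 2 + x ^ 2) (2 * x) x := by
    simpa using (hasDerivAt_pow 2 x).const_add (a ^ 2)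
  have h2 : HasDerivAt (fun x : ℝ => -2 * x) (-2) x := by
    simpa using (hasDerivAt_id x).const_mul (-2 : ℝ)
  have h3 : HasDerivAt (fun x : ℝ => -2 * x / (a ^ 2 + x ^ 2))
      ((-2 * (a ^ 2 + x ^ 2) - (-2 * x) * (2 * x)) / (a ^ 2 + x ^ 2) ^ 2) x :=
    h2.div h1 hpos.ne'
  have h4 : HasDerivAt (fun x : ℝ => x / a) (1 / a) x := by
    simpa using (hasDerivAt_id x).div_const a
  have h5 : HasDerivAt (fun x : ℝ => Real.arctan (x / a))
      (1 / (1 + (x / a) ^ 2) * (1 / a)) x :=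
    by have hc := (Real.hasDerivAt_arctan (x / a)).comp x h4; exact hc
  have h6 := h3.sub (h5.const_mul 2)
  refine h6.congr_deriv ?_
  have h7 : 1 + (x / a) ^ 2 ≠ 0 := by positivity
  field_simp
  ring

private lemma aux_nonpos (ha : 1 ≤ a) (x : ℝ) :
    -(2 * (a - 1) * x ^ 2 + 2 * (a + 1) * a ^ 2) / (a ^ 2 + x ^ 2) ^ 2 ≤ 0 := by
  have hpos := aux_pos a ha x
  apply div_nonpos_of_nonpos_of_nonneg
  · nlinarith [sq_nonneg x, sq_nonneg a]
  · positivity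

end aux

/-- For `a ≥ 1`, the function
`h(x) = (a−1)·log(a² + x²) − 2x·arctan(x/a)` is concave on ℝ, and its second
derivative equals `−(2(a−1)x² + 2(a+1)a²)/(a² + x²)²`, which is nonpositive. -/
theorem stmt1 (a : ℝ) (ha : 1 ≤ a)
    (h : ℝ → ℝ)
    (hh : ∀ x : ℝ, h x = (a - 1) * Real.log (a ^ 2 + x ^ 2)
        - 2 * x * Real.arctan (x / a)) :
    ConcaveOn ℝ Set.univ h ∧
    ∀ x : ℝ,
      deriv (deriv h) x = -(2 * (a - 1) * x ^ 2 + 2 * (a + 1) * a ^ 2) / (a ^ 2 + x ^ 2) ^ 2 ∧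
      -(2 * (a - 1) * x ^ 2 + 2 * (a + 1) * a ^ 2) / (a ^ 2 + x ^ 2) ^ 2 ≤ 0 := by
  have hd1 := aux_deriv1 a ha h hh
  have hd2 : ∀ x, deriv (deriv h) x
      = -(2 * (a - 1) * x ^ 2 + 2 * (a + 1) * a ^ 2) / (a ^ 2 + x ^ 2) ^ 2 := by
    intro x
    rw [hd1]
    exact (aux_hasDeriv2 a ha x).deriv
  refine ⟨?_, fun x => ⟨hd2 x, aux_nonpos a ha x⟩⟩
  apply concaveOn_of_deriv2_nonpos convex_univ
  · have hc : Continuous fun x : ℝ => (a - 1) * Real.log (a ^ 2 + x ^ 2)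
        - 2 * x * Real.arctan (x / a) := by
      have hlog : Continuous fun x : ℝ => Real.log (a ^ 2 + x ^ 2) :=
        (continuous_const.add (continuous_pow 2)).log fun x => (aux_pos a ha x).ne'
      have harc : Continuous fun x : ℝ => Real.arctan (x / a) :=
        Real.continuous_arctan.comp (continuous_id.div_const a)
      exact ((continuous_const.mul hlog).sub
        ((continuous_const.mul continuous_id).mul harc))
    exact ((funext hh : h = _) ▸ hc).continuousOn
  · intro x _
    exact (aux_hasDeriv1 a ha h hh x).differentiableAt.differentiableWithinAt
  · intro x _
    rw [hd1]
    exact (aux_hasDeriv2 a ha x).differentiableAt.differentiableWithinAt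
  · intro x _
    have h2 : deriv^[2] h x = deriv (deriv h) x := rfl
    rw [h2, hd2 x]
    exact aux_nonpos a ha x
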